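/- Let k be a field, λ₁ ≠ λ₂ nonzero in k, and X' = (k², k²; id, diag(λ₁,λ₂), γ) with γ(e(1)) = e(2), γ(e(2)) = 0, a representation of the 3-Kronecker quiver. Then Ext¹(Y, X') has k-dimension 2, where Y = (k, k; 1, 0, 0). -/

import Mathlib

/- dim Ext¹(Y, X') = 2 where X' = (k², k²; id, diag(λ₁,λ₂), γ) with γ(e1) = e2, γ(e2) = 0,
   and Y = (k,k;1,0,0).  Ext¹(Y,X') is the cokernel of (v,w) ↦ (α v − w, β v, γ v). -/

def betaTwo (k : Type) [Field k] (l₁ l₂ : k) : (Fin 2 → k) →ₗ[k] (Fin 2 → k) where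
  toFun v := ![l₁ * v 0, l₂ * v 1]
  map_add' u v := by funext i; fin_cases i <;> simp [mul_add]
  map_smul' c v := by funext i; fin_cases i <;> (simp; ring)

/-- γ with γ(e 0) = e 1, γ(e 1) = 0. -/
def gammaNilp (k : Type) [Field k] : (Fin 2 → k) →ₗ[k] (Fin 2 → k) where
  toFun v := ![0, v 0]
  map_add' u v := by funext i; fin_cases i <;> simp
  map_smul' c v := by funext i; fin_cases i <;> simp

noncomputable def extMap' (k : Type) [Field k] (l₁ l₂ : k) :
    ((Fin 2 → k) × (Fin 2 → k)) →ₗ[k] ((Fin 2 → k) × (Fin 2 → k) × (Fin 2 → k)) :=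
  (LinearMap.fst k (Fin 2 → k) (Fin 2 → k) - LinearMap.snd k (Fin 2 → k) (Fin 2 → k)).prod
    (((betaTwo k l₁ l₂).comp (LinearMap.fst k (Fin 2 → k) (Fin 2 → k))).prod
      ((gammaNilp k).comp (LinearMap.fst k (Fin 2 → k) (Fin 2 → k))))

theorem stmt11 (k : Type) [Field k] (l₁ l₂ : k)
    (h1 : l₁ ≠ 0) (h2 : l₂ ≠ 0) (h12 : l₁ ≠ l₂) :
    Module.finrank k
      (((Fin 2 → k) × (Fin 2 → k) × (Fin 2 → k)) ⧸ LinearMap.range (extMap' k l₁ l₂)) = 2 := by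
  have hinj : Function.Injective (extMap' k l₁ l₂) := by
    rw [← LinearMap.ker_eq_bot]
    ext ⟨v, w⟩
    simp only [LinearMap.mem_ker, Submodule.mem_bot, extMap', LinearMap.prod_apply,
      LinearMap.comp_apply, LinearMap.sub_apply, LinearMap.fst_apply, LinearMap.snd_apply,
      Function.prod, Prod.mk_eq_zero, sub_eq_zero, betaTwo, gammaNilp, LinearMap.coe_mk,
      AddHom.coe_mk]
    constructor
    · rintro ⟨hvw, hb, _⟩
      have h0 := congrFun hb 0
      have h1' := congrFun hb 1
      simp at h0 h1'
      have hv0 : v 0 = 0 := by rcases h0 with h | h; exact absurd h h1; exact h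
      have hv1 : v 1 = 0 := by rcases h1' with h | h; exact absurd h h2; exact h
      have hv : v = 0 := by funext i; fin_cases i <;> assumption
      exact ⟨hv, hvw ▸ hv⟩
    · rintro ⟨hv, hw⟩
      subst hv hw
      refine ⟨rfl, ?_, ?_⟩ <;> funext i <;> fin_cases i <;> simp
  have hrange : Module.finrank k (LinearMap.range (extMap' k l₁ l₂)) = 4 := by
    rw [LinearMap.finrank_range_of_inj hinj]
    simp [Module.finrank_prod]
  have h := Submodule.finrank_quotient_add_finrank (LinearMap.range (extMap' k l₁ l₂))
  have htot : Module.finrank k ((Fin 2 → k) × (Fin 2 → k) × (Fin 2 → k)) = 6 := by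
    simp [Module.finrank_prod]
  omega
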